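/- For every τ ∈ P_n and every i ∈ ℤ/2nℤ: (1) if i ∈ A(τ) then s_i·τ covers τ in the uncrossing partial order and c(s_i·τ) = c(τ) + 1; (2) if i ∈ B(τ) then τ covers s_i·τ and c(s_i·τ) = c(τ) − 1; (3) if i ∈ C(τ) then s_i·τ = τ. -/

import Mathlib

open scoped Classical

/-- `x` lies strictly inside the arc going (cyclically) from `a` to `b`. -/
def InArc (m : ℕ) (a b x : ZMod m) : Prop :=
  0 < (x - a).val ∧ (x - a).val < (b - a).val

/-- The chords `{a,b}` and `{c,d}` on the circle `ℤ/mℤ` cross: all four endpoints are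
distinct and the endpoints alternate in cyclic order. -/
def Crosses (m : ℕ) (a b c d : ZMod m) : Prop :=
  a ≠ b ∧ c ≠ d ∧ c ≠ a ∧ c ≠ b ∧ d ≠ a ∧ d ≠ b ∧
    (InArc m a b c ↔ InArc m b a d)

set_option linter.unusedSectionVars false

section Arith
variable {m : ℕ} [NeZero m]

lemma zval_sub (x y : ZMod m) : (x - y).val = (x.val + (m - y.val)) % m := by
  rw [sub_eq_add_neg, ZMod.val_add, ZMod.neg_val]
  split_ifs with h
  · subst h
    simp [ZMod.val_zero, Nat.add_mod_right]
  · rfl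

lemma modh1 {A B : ℕ} (hA : A < m) (hBA : B ≤ A) : (A + (m - B)) % m = A - B := by
  have h1 : A + (m - B) = (A - B) + m := by omega
  rw [h1, Nat.add_mod_right, Nat.mod_eq_of_lt (by omega)]

lemma modh2 {A B : ℕ} (hB : B ≤ m) (hAB : A < B) : (A + (m - B)) % m = A + m - B := by
  rw [Nat.mod_eq_of_lt (by omega)]; omega

lemma zval_ne {x y : ZMod m} (h : x ≠ y) : x.val ≠ y.val :=
  fun hc => h (ZMod.val_injective m hc)

lemma zval_pos {x : ZMod m} (h : x ≠ 0) : 0 < x.val := ZMod.val_pos.mpr h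

lemma sub_ne_zero' {x y : ZMod m} (h : x ≠ y) : x - y ≠ 0 := sub_ne_zero.mpr h

-- x on arc from a to b, base form
lemma inArc_zero (b x : ZMod m) : InArc m 0 b x ↔ 0 < x.val ∧ x.val < b.val := by
  simp [InArc]

lemma inArc_shift (t a b x : ZMod m) : InArc m (a + t) (b + t) (x + t) ↔ InArc m a b x := by
  simp [InArc, add_sub_add_right_eq_sub]

lemma inArc_shift' (a b x : ZMod m) : InArc m a b x ↔ InArc m 0 (b - a) (x - a) := by
  have := inArc_shift (m := m) a 0 (b - a) (x - a)
  simp only [zero_add, sub_add_cancel] at this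
  exact this

/-- L1: flipping the chord complements the arc. -/
lemma inArc_flip {a b x : ZMod m} (hab : a ≠ b) (hxa : x ≠ a) (hxb : x ≠ b) :
    InArc m b a x ↔ ¬ InArc m a b x := by
  rw [inArc_shift' b a x, inArc_shift' a b x, inArc_zero, inArc_zero]
  have hB : (b - a) ≠ 0 := sub_ne_zero' (Ne.symm hab)
  have hX : (x - a) ≠ 0 := sub_ne_zero' hxa
  have hXB : (x - a).val ≠ (b - a).val := zval_ne (fun h => hxb (by
    have := sub_left_injective h; exact this))
  have e1 : (a - b) = -(b - a) := by ring
  have e2 : (x - b) = (x - a) - (b - a) := by ring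
  rw [e1, e2, ZMod.neg_val, if_neg hB, zval_sub]
  have h1 : (x - a).val < m := ZMod.val_lt _
  have h2 : (b - a).val < m := ZMod.val_lt _
  have h3 : 0 < (x - a).val := zval_pos hX
  have h4 : 0 < (b - a).val := zval_pos hB
  rcases lt_or_gt_of_ne hXB with h | h
  · rw [modh2 (by omega) h]; omega
  · rw [modh1 h1 (le_of_lt h)]; omega

section Geo
variable {m : ℕ} [NeZero m] {a b c d x y i u v : ZMod m}

lemma crosses_iff' (hab : a ≠ b) (hcd : c ≠ d) (hca : c ≠ a) (hcb : c ≠ b)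
    (hda : d ≠ a) (hdb : d ≠ b) :
    Crosses m a b c d ↔ ((c - a).val < (b - a).val ↔ ¬ (d - a).val < (b - a).val) := by
  have h1 : 0 < (c - a).val := zval_pos (sub_ne_zero' hca)
  have h2 : 0 < (d - a).val := zval_pos (sub_ne_zero' hda)
  have hc : InArc m a b c ↔ (c - a).val < (b - a).val := by
    rw [InArc]; exact and_iff_right h1
  have hd : InArc m a b d ↔ (d - a).val < (b - a).val := by
    rw [InArc]; exact and_iff_right h2
  rw [Crosses, inArc_flip hab hda hdb, hc, hd]
  constructor
  · rintro ⟨-, -, -, -, -, -, h⟩; exact h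
  · intro h; exact ⟨hab, hcd, hca, hcb, hda, hdb, h⟩

lemma sub_val_ne (h : b ≠ c) : (b - a).val ≠ (c - a).val :=
  zval_ne (fun hh => h (by have := sub_left_injective hh; exact this))

/-- exchange the two chords -/
lemma crosses_swap (hab : a ≠ b) (hcd : c ≠ d) (hca : c ≠ a) (hcb : c ≠ b)
    (hda : d ≠ a) (hdb : d ≠ b) :
    Crosses m a b c d ↔ Crosses m c d a b := by
  rw [crosses_iff' hab hcd hca hcb hda hdb,
      crosses_iff' hcd hab (Ne.symm hca) (Ne.symm hda) (Ne.symm hcb) (Ne.symm hdb)]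
  have e1 : a - c = -(c - a) := by ring
  have e2 : d - c = (d - a) - (c - a) := by ring
  have e3 : b - c = (b - a) - (c - a) := by ring
  set B := (b - a).val with hB
  set C := (c - a).val with hC
  set D := (d - a).val with hD
  have hBm : B < m := ZMod.val_lt _
  have hCm : C < m := ZMod.val_lt _
  have hDm : D < m := ZMod.val_lt _
  have hB0 : 0 < B := zval_pos (sub_ne_zero' (Ne.symm hab))
  have hC0 : 0 < C := zval_pos (sub_ne_zero' hca)
  have hD0 : 0 < D := zval_pos (sub_ne_zero' hda)
  have hBC : B ≠ C := sub_val_ne (Ne.symm hcb)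
  have hBD : B ≠ D := sub_val_ne (Ne.symm hdb)
  have hCD : C ≠ D := sub_val_ne hcd
  rw [e1, e2, e3, ZMod.neg_val, if_neg (sub_ne_zero' hca),
      zval_sub (d - a) (c - a), zval_sub (b - a) (c - a), ← hC, ← hB, ← hD]
  rcases lt_or_gt_of_ne hCD with h1 | h1 <;> rcases lt_or_gt_of_ne hBC with h2 | h2
  · rw [modh1 hDm (le_of_lt h1), modh2 (le_of_lt hCm) h2]; omega
  · rw [modh1 hDm (le_of_lt h1), modh1 hBm (le_of_lt h2)]; omega
  · rw [modh2 (le_of_lt hCm) h1, modh2 (le_of_lt hCm) h2]; omega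
  · rw [modh2 (le_of_lt hCm) h1, modh1 hBm (le_of_lt h2)]; omega

/-- swap within first pair -/
lemma crosses_swap_left : Crosses m a b c d ↔ Crosses m b a c d := by
  unfold Crosses
  constructor
  · rintro ⟨hab, hcd, hca, hcb, hda, hdb, h⟩
    refine ⟨hab.symm, hcd, hcb, hca, hdb, hda, ?_⟩
    rw [inArc_flip hab hda hdb] at h
    rw [inArc_flip hab hca hcb]
    tauto
  · rintro ⟨hab, hcd, hcb, hca, hdb, hda, h⟩
    refine ⟨hab.symm, hcd, hca, hcb, hda, hdb, ?_⟩
    rw [inArc_flip (Ne.symm hab) hca hcb] at h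
    rw [inArc_flip (Ne.symm hab) hda hdb]
    tauto

/-- swap within second pair -/
lemma crosses_swap_right : Crosses m a b c d ↔ Crosses m a b d c := by
  unfold Crosses
  constructor
  · rintro ⟨hab, hcd, hca, hcb, hda, hdb, h⟩
    refine ⟨hab, hcd.symm, hda, hdb, hca, hcb, ?_⟩
    rw [inArc_flip hab hda hdb] at h
    rw [inArc_flip hab hca hcb]
    tauto
  · rintro ⟨hab, hcd, hda, hdb, hca, hcb, h⟩
    refine ⟨hab, hcd.symm, hca, hcb, hda, hdb, ?_⟩
    rw [inArc_flip hab hca hcb] at h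
    rw [inArc_flip hab hda hdb]
    tauto

lemma val_eq_one_iff (hm : 1 < m) : x.val = 1 ↔ x = 1 := by
  haveI : Fact (1 < m) := ⟨hm⟩
  constructor
  · intro h; apply ZMod.val_injective m; rw [h, ZMod.val_one]
  · intro h; rw [h, ZMod.val_one]

/-- moving an endpoint from i to i+1 across no other point keeps arcs -/
lemma inArc_adj (hm : 1 < m) (h1 : i ≠ x) (h2 : i ≠ y) (h3 : i + 1 ≠ x) (h4 : i + 1 ≠ y) :
    (InArc m x y i ↔ InArc m x y (i + 1)) := by
  haveI : Fact (1 < m) := ⟨hm⟩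
  have e : i + 1 - x = (i - x) + 1 := by ring
  have hA0 : 0 < (i - x).val := zval_pos (sub_ne_zero' h1)
  have hA0' : 0 < (i + 1 - x).val := zval_pos (sub_ne_zero' h3)
  have hval : (i + 1 - x).val = ((i - x).val + 1) % m := by
    rw [e, ZMod.val_add, ZMod.val_one]
  have hAm : (i - x).val < m := ZMod.val_lt _
  have hwrap : (i - x).val + 1 < m := by
    rcases Nat.lt_or_ge ((i - x).val + 1) m with h | h
    · exact h
    · exfalso
      have : (i - x).val + 1 = m := by omega
      rw [this, Nat.mod_self] at hval
      omega
  rw [Nat.mod_eq_of_lt hwrap] at hval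
  have hAV : (i - x).val ≠ (y - x).val := sub_val_ne (fun h => h2 h)
  have hAV' : (i + 1 - x).val ≠ (y - x).val := sub_val_ne (fun h => h4 h)
  unfold InArc
  rw [hval] at hAV' ⊢
  omega

lemma self_ne_add_one (hm : 1 < m) (i : ZMod m) : i ≠ i + 1 := by
  haveI : Fact (1 < m) := ⟨hm⟩
  intro h
  have h1 : i + 0 = i + 1 := by simpa using h
  exact zero_ne_one (add_left_cancel h1)

/-- the two possible re-matchings of 4 points i, i+1, u, v: exactly one crosses -/
lemma crosses_one (hm : 1 < m) (hui : u ≠ i) (hui1 : u ≠ i + 1) (hvi : v ≠ i)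
    (hvi1 : v ≠ i + 1) (huv : u ≠ v) :
    Crosses m i u (i + 1) v ↔ ¬ Crosses m i v (i + 1) u := by
  haveI : Fact (1 < m) := ⟨hm⟩
  have hii1 : i ≠ i + 1 := self_ne_add_one hm i
  rw [crosses_iff' (fun h => hui (h.symm)) (fun h => hvi1 h.symm) hii1.symm
      (fun h => hui1 h.symm) hvi (fun h => huv h.symm),
    crosses_iff' (fun h => hvi h.symm) (fun h => hui1 h.symm) hii1.symm
      (fun h => hvi1 h.symm) hui huv]
  have e1 : i + 1 - i = (1 : ZMod m) := by ring
  rw [e1, ZMod.val_one]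
  set p := (u - i).val with hp
  set q := (v - i).val with hq
  have hp0 : 0 < p := zval_pos (sub_ne_zero' hui)
  have hq0 : 0 < q := zval_pos (sub_ne_zero' hvi)
  have hp1 : p ≠ 1 := by
    intro h
    exact hui1 (by have := (val_eq_one_iff hm).mp h; rwa [sub_eq_iff_eq_add, add_comm] at this)
  have hq1 : q ≠ 1 := by
    intro h
    exact hvi1 (by have := (val_eq_one_iff hm).mp h; rwa [sub_eq_iff_eq_add, add_comm] at this)
  have hpq : p ≠ q := sub_val_ne huv
  omega

end Geo

section Geo2
variable {m : ℕ} [NeZero m] {i e c d x y z w : ZMod m}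

lemma swap_fix {α : Type*} [DecidableEq α] (i j t : α) (h1 : t ≠ i) (h2 : t ≠ j) :
    Equiv.swap i j t = t :=
  Equiv.swap_apply_of_ne_of_ne h1 h2

lemma crosses_adj (hm : 1 < m) (he1 : e ≠ i) (he2 : e ≠ i + 1) (hci : c ≠ i)
    (hci1 : c ≠ i + 1) (hdi : d ≠ i) (hdi1 : d ≠ i + 1) (hcd : c ≠ d) (hce : c ≠ e)
    (hde : d ≠ e) :
    Crosses m i e c d ↔ Crosses m (i + 1) e c d := by
  rw [crosses_swap (Ne.symm he1) hcd hci hce hdi hde,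
      crosses_swap (Ne.symm he2) hcd hci1 hce hdi1 hde]
  unfold Crosses
  rw [inArc_adj hm (Ne.symm hci) (Ne.symm hdi) (Ne.symm hci1) (Ne.symm hdi1)]
  constructor
  · rintro ⟨-, -, -, -, -, -, h⟩
    exact ⟨hcd, Ne.symm he2, Ne.symm hci1, Ne.symm hdi1, Ne.symm hce, Ne.symm hde, h⟩
  · rintro ⟨-, -, -, -, -, -, h⟩
    exact ⟨hcd, Ne.symm he1, Ne.symm hci, Ne.symm hdi, Ne.symm hce, Ne.symm hde, h⟩

lemma crosses_s (hm : 1 < m) (hxy : x ≠ y) (hzw : z ≠ w) (hzx : z ≠ x) (hzy : z ≠ y)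
    (hwx : w ≠ x) (hwy : w ≠ y) (hzi : z ≠ i) (hzi1 : z ≠ i + 1) (hwi : w ≠ i)
    (hwi1 : w ≠ i + 1) :
    Crosses m x y z w ↔ Crosses m (Equiv.swap i (i + 1) x) (Equiv.swap i (i + 1) y) z w := by
  by_cases hx : x = i
  · subst hx
    rw [Equiv.swap_apply_left]
    by_cases hy : y = x + 1
    · subst hy
      rw [Equiv.swap_apply_right]
      exact crosses_swap_left
    · rw [swap_fix x (x + 1) y (Ne.symm hxy) hy]
      exact crosses_adj hm (Ne.symm hxy) hy hzx hzi1 hwx hwi1 hzw hzy hwy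
  · by_cases hx1 : x = i + 1
    · subst hx1
      rw [Equiv.swap_apply_right]
      by_cases hy : y = i
      · subst hy
        rw [Equiv.swap_apply_left]
        exact crosses_swap_left
      · rw [swap_fix i (i + 1) y hy (Ne.symm hxy)]
        exact (crosses_adj hm hy (Ne.symm hxy) hzi hzx hwi hwx hzw hzy hwy).symm
    · rw [swap_fix i (i + 1) x hx hx1]
      by_cases hy : y = i
      · subst hy
        rw [Equiv.swap_apply_left]
        exact crosses_swap_left.trans ((crosses_adj hm hx hx1 hzi hzi1 hwi hwi1 hzw
          hzx hwx).trans crosses_swap_left.symm)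
      · by_cases hy1 : y = i + 1
        · subst hy1
          rw [Equiv.swap_apply_right]
          exact crosses_swap_left.trans (((crosses_adj hm hx hx1 hzi hzi1 hwi hwi1 hzw
            hzx hwx).symm).trans crosses_swap_left.symm)
        · rw [swap_fix i (i + 1) y hy hy1]

lemma crosses_s_main (hm : 1 < m) (hxy : x ≠ y) (hzw : z ≠ w) (hzx : z ≠ x) (hzy : z ≠ y)
    (hwx : w ≠ x) (hwy : w ≠ y)
    (hspec : ¬ (((x = i ∨ y = i) ∧ (z = i + 1 ∨ w = i + 1)) ∨
                ((x = i + 1 ∨ y = i + 1) ∧ (z = i ∨ w = i)))) :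
    Crosses m x y z w ↔ Crosses m (Equiv.swap i (i + 1) x) (Equiv.swap i (i + 1) y)
      (Equiv.swap i (i + 1) z) (Equiv.swap i (i + 1) w) := by
  by_cases h2 : z ≠ i ∧ z ≠ i + 1 ∧ w ≠ i ∧ w ≠ i + 1
  · obtain ⟨h2a, h2b, h2c, h2d⟩ := h2
    rw [swap_fix i (i + 1) z h2a h2b, swap_fix i (i + 1) w h2c h2d]
    exact crosses_s hm hxy hzw hzx hzy hwx hwy h2a h2b h2c h2d
  · have h1 : x ≠ i ∧ x ≠ i + 1 ∧ y ≠ i ∧ y ≠ i + 1 := by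
      by_contra h1
      simp only [not_and_or, not_not] at h1 h2
      rcases h1 with h | h | h | h <;> rcases h2 with g | g | g | g <;> subst h <;>
        simp_all
    obtain ⟨h1a, h1b, h1c, h1d⟩ := h1
    rw [swap_fix i (i + 1) x h1a h1b, swap_fix i (i + 1) y h1c h1d]
    constructor
    · intro hcr
      have h := (crosses_swap hxy hzw hzx hzy hwx hwy).mp hcr
      have h' := (crosses_s hm hzw hxy (Ne.symm hzx) (Ne.symm hwx) (Ne.symm hzy)
        (Ne.symm hwy) h1a h1b h1c h1d).mp h
      obtain ⟨d1, d2, d3, d4, d5, d6, d7⟩ := h'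
      exact (crosses_swap d1 d2 d3 d4 d5 d6).mp ⟨d1, d2, d3, d4, d5, d6, d7⟩
    · intro hcr
      obtain ⟨d1, d2, d3, d4, d5, d6, d7⟩ := hcr
      have h := (crosses_swap d1 d2 d3 d4 d5 d6).mp ⟨d1, d2, d3, d4, d5, d6, d7⟩
      have h' := (crosses_s hm hzw hxy (Ne.symm hzx) (Ne.symm hwx) (Ne.symm hzy)
        (Ne.symm hwy) h1a h1b h1c h1d).mpr h
      exact (crosses_swap hzw hxy (Ne.symm hzx) (Ne.symm hwx) (Ne.symm hzy)
        (Ne.symm hwy)).mp h'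
end Geo2

/-- A matching of the `2n` points `ℤ/2nℤ`: a fixed-point-free involution. -/
def IsMatching (n : ℕ) (τ : ZMod (2 * n) → ZMod (2 * n)) : Prop :=
  (∀ i, τ (τ i) = i) ∧ ∀ i, τ i ≠ i

/-- The number of crossings `c(τ)`: each unordered crossing pair of chords of `τ`
is counted `8` times by ordered pairs of representatives. -/
noncomputable def crossNum (n : ℕ) (τ : ZMod (2 * n) → ZMod (2 * n)) : ℕ :=
  {p : ZMod (2 * n) × ZMod (2 * n) |
    Crosses (2 * n) p.1 (τ p.1) p.2 (τ p.2)}.ncard / 8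

/-- Replace the pairs `{a, τ a}` and `{b, τ b}` of `τ` by `{a, b}` and `{τ a, τ b}`. -/
def swapPair (n : ℕ) (τ : ZMod (2 * n) → ZMod (2 * n)) (a b : ZMod (2 * n)) :
    ZMod (2 * n) → ZMod (2 * n) :=
  fun x => if x = a then b else if x = b then a
    else if x = τ a then τ b else if x = τ b then τ a else τ x

/-- `τ'` is obtained from `τ` by a single uncrossing move: two crossing pairs
`{a, τ a}`, `{b, τ b}` are replaced by `{a,b}, {τ a, τ b}` or by `{a, τ b}, {τ a, b}`. -/
def UncrossingMove (n : ℕ) (τ τ' : ZMod (2 * n) → ZMod (2 * n)) : Prop :=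
  ∃ a b, Crosses (2 * n) a (τ a) b (τ b) ∧
    (τ' = swapPair n τ a b ∨ τ' = swapPair n τ a (τ b))

/-- The uncrossing partial order on matchings: the reflexive-transitive closure of the
relation `τ' < τ` whenever `τ'` is obtained from `τ` by an uncrossing move and
`c(τ') = c(τ) - 1`. -/
def UncrossLE (n : ℕ) (τ σ : ZMod (2 * n) → ZMod (2 * n)) : Prop :=
  Relation.ReflTransGen (fun x y => IsMatching n x ∧ IsMatching n y ∧
    UncrossingMove n y x ∧ crossNum n y = crossNum n x + 1) τ σ

/-- `s_i · τ := s_i ∘ τ ∘ s_i` where `s_i` is the transposition of `i` and `i+1`. -/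
def sMove (n : ℕ) (i : ZMod (2 * n)) (τ : ZMod (2 * n) → ZMod (2 * n)) :
    ZMod (2 * n) → ZMod (2 * n) :=
  fun x => Equiv.swap i (i + 1) (τ (Equiv.swap i (i + 1) x))

/-- `i ∈ A(τ)`: `τ i ≠ i+1` and the chords `{i, τ i}` and `{i+1, τ (i+1)}` do not cross. -/
def inA (n : ℕ) (τ : ZMod (2 * n) → ZMod (2 * n)) (i : ZMod (2 * n)) : Prop :=
  τ i ≠ i + 1 ∧ ¬ Crosses (2 * n) i (τ i) (i + 1) (τ (i + 1))

/-- `i ∈ B(τ)`: `τ i ≠ i+1` and the chords `{i, τ i}` and `{i+1, τ (i+1)}` cross. -/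
def inB (n : ℕ) (τ : ZMod (2 * n) → ZMod (2 * n)) (i : ZMod (2 * n)) : Prop :=
  τ i ≠ i + 1 ∧ Crosses (2 * n) i (τ i) (i + 1) (τ (i + 1))

/-- `i ∈ C(τ)`: `i` is matched with `i+1`. -/
def inC (n : ℕ) (τ : ZMod (2 * n) → ZMod (2 * n)) (i : ZMod (2 * n)) : Prop :=
  τ i = i + 1

/-- Elements of `P̂_n`, modelled inside `Option`: `none` is the adjoined bottom `0̂`,
and `some τ` belongs to `P̂_n` when `τ` is a matching. -/
def inPhat (n : ℕ) (x : Option (ZMod (2 * n) → ZMod (2 * n))) : Prop :=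
  ∀ τ ∈ x, IsMatching n τ

/-- The order on `P̂_n`: `0̂` is below everything, and matchings are compared by the
uncrossing order. -/
def hatLE (n : ℕ) (x y : Option (ZMod (2 * n) → ZMod (2 * n))) : Prop :=
  x = none ∨ ∃ τ σ, x = some τ ∧ y = some σ ∧ UncrossLE n τ σ

/-- The rank function of `P̂_n`: `c(0̂) = -1` and `c(some τ) = crossNum τ`. -/
noncomputable def hatRank (n : ℕ) (x : Option (ZMod (2 * n) → ZMod (2 * n))) : ℤ :=
  x.elim (-1) fun τ => (crossNum n τ : ℤ)

section MatchLayer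

lemma sMove_invol (n : ℕ) (i : ZMod (2 * n)) (τ : ZMod (2 * n) → ZMod (2 * n)) :
    sMove n i (sMove n i τ) = τ := by
  funext x
  simp [sMove, Equiv.swap_apply_self]

lemma sMove_matching (n : ℕ) (τ : ZMod (2 * n) → ZMod (2 * n)) (hτ : IsMatching n τ)
    (i : ZMod (2 * n)) : IsMatching n (sMove n i τ) := by
  constructor
  · intro x
    simp [sMove, Equiv.swap_apply_self, hτ.1]
  · intro x h
    apply hτ.2 (Equiv.swap i (i + 1) x)
    have h2 := congrArg (Equiv.swap i (i + 1)) h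
    simpa [sMove, Equiv.swap_apply_self] using h2

lemma sMove_inC (n : ℕ) (τ : ZMod (2 * n) → ZMod (2 * n)) (hτ : IsMatching n τ)
    (i : ZMod (2 * n)) (hC : τ i = i + 1) : sMove n i τ = τ := by
  have hτ1 : τ (i + 1) = i := by rw [← hC, hτ.1]
  funext x
  show Equiv.swap i (i + 1) (τ (Equiv.swap i (i + 1) x)) = τ x
  by_cases hx : x = i
  · subst hx
    rw [Equiv.swap_apply_left, hτ1, hC, Equiv.swap_apply_left]
  · by_cases hx1 : x = i + 1
    · subst hx1
      rw [Equiv.swap_apply_right, hC, hτ1, Equiv.swap_apply_right]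
    · rw [swap_fix i (i + 1) x hx hx1]
      have h1 : τ x ≠ i := by
        intro h; apply hx1; rw [← hτ.1 x, h, hC]
      have h2 : τ x ≠ i + 1 := by
        intro h; apply hx; rw [← hτ.1 x, h, hτ1]
      rw [swap_fix i (i + 1) (τ x) h1 h2]

lemma uncrossLE_mono {n : ℕ} {x y : ZMod (2 * n) → ZMod (2 * n)} (h : UncrossLE n x y) :
    x = y ∨ crossNum n x < crossNum n y := by
  induction h with
  | refl => exact Or.inl rfl
  | tail h1 h2 ih =>
    right
    have hc := h2.2.2.2
    rcases ih with rfl | hlt <;> omega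

end MatchLayer

section CaseA

variable {n : ℕ}

set_option maxHeartbeats 1000000 in
lemma caseA (hn : 1 ≤ n) (τ : ZMod (2 * n) → ZMod (2 * n)) (hτ : IsMatching n τ)
    (i : ZMod (2 * n)) (hu1 : τ i ≠ i + 1)
    (hnc : ¬ Crosses (2 * n) i (τ i) (i + 1) (τ (i + 1))) :
    UncrossingMove n (sMove n i τ) τ ∧
      crossNum n (sMove n i τ) = crossNum n τ + 1 := by
  haveI : NeZero (2 * n) := ⟨by omega⟩
  have hm : 1 < 2 * n := by omega
  obtain ⟨hinv, hfix⟩ := hτ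
  set u := τ i with hu
  set v := τ (i + 1) with hv
  have hτu : τ u = i := hinv i
  have hτv : τ v = i + 1 := hinv (i + 1)
  have hii1 : i ≠ i + 1 := self_ne_add_one hm i
  have hui : u ≠ i := hfix i
  have hui1 : u ≠ i + 1 := hu1
  have hvi1 : v ≠ i + 1 := hfix (i + 1)
  have hvi : v ≠ i := by
    intro h
    have h' := hτv
    rw [h] at h'
    exact hu1 h'
  have huv : u ≠ v := by
    intro h
    have h' : τ u = τ v := by rw [h]
    rw [hτu, hτv] at h'
    exact hii1 h' 
  -- pointwise values of σ := sMove n i τ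
  have hσi : sMove n i τ i = v := by
    show Equiv.swap i (i + 1) (τ (Equiv.swap i (i + 1) i)) = v
    rw [Equiv.swap_apply_left, ← hv, swap_fix i (i + 1) v hvi hvi1]
  have hσi1 : sMove n i τ (i + 1) = u := by
    show Equiv.swap i (i + 1) (τ (Equiv.swap i (i + 1) (i + 1))) = u
    rw [Equiv.swap_apply_right, ← hu, swap_fix i (i + 1) u hui hui1]
  have hσu : sMove n i τ u = i + 1 := by
    show Equiv.swap i (i + 1) (τ (Equiv.swap i (i + 1) u)) = i + 1
    rw [swap_fix i (i + 1) u hui hui1, hτu, Equiv.swap_apply_left]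
  have hσv : sMove n i τ v = i := by
    show Equiv.swap i (i + 1) (τ (Equiv.swap i (i + 1) v)) = i
    rw [swap_fix i (i + 1) v hvi hvi1, hτv, Equiv.swap_apply_right]
  have hσo : ∀ x, x ≠ i → x ≠ i + 1 → x ≠ u → x ≠ v → sMove n i τ x = τ x := by
    intro x h1 h2 h3 h4
    show Equiv.swap i (i + 1) (τ (Equiv.swap i (i + 1) x)) = τ x
    rw [swap_fix i (i + 1) x h1 h2]
    have g1 : τ x ≠ i := by intro h; apply h3; rw [← hinv x, h, ← hu]
    have g2 : τ x ≠ i + 1 := by intro h; apply h4; rw [← hinv x, h, ← hv]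
    rw [swap_fix i (i + 1) (τ x) g1 g2]
  -- the crossing of the two new chords
  have hXuv : Crosses (2 * n) i v (i + 1) u := by
    by_contra h
    exact hnc ((crosses_one hm hui hui1 hvi hvi1 huv).mpr h)
  -- part 1 : the uncrossing move
  have hswap : swapPair n (sMove n i τ) i u = τ := by
    funext x
    show (if x = i then u else if x = u then i
      else if x = sMove n i τ i then sMove n i τ u
      else if x = sMove n i τ u then sMove n i τ i else sMove n i τ x) = τ x
    rw [hσi, hσu]
    by_cases h1 : x = i
    · subst h1; rw [if_pos rfl, hu]
    rw [if_neg h1]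
    by_cases h2 : x = u
    · subst h2; rw [if_pos rfl, hτu]
    rw [if_neg h2]
    by_cases h3 : x = v
    · subst h3; rw [if_pos rfl, hτv]
    rw [if_neg h3]
    by_cases h4 : x = i + 1
    · subst h4; rw [if_pos rfl]
    rw [if_neg h4]
    exact hσo x h1 h4 h2 h3
  have hmove : UncrossingMove n (sMove n i τ) τ := by
    refine ⟨i, u, ?_, Or.inl hswap.symm⟩
    rw [hσi, hσu]
    exact crosses_swap_right.mp hXuv
  refine ⟨hmove, ?_⟩
  classical
  -- abbreviations
  set F : ZMod (2 * n) × ZMod (2 * n) → ZMod (2 * n) × ZMod (2 * n) :=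
    fun p => (Equiv.swap i (i + 1) p.1, Equiv.swap i (i + 1) p.2) with hF
  set E : Set (ZMod (2 * n) × ZMod (2 * n)) :=
    {(i, i + 1), (i, u), (v, i + 1), (v, u), (i + 1, i), (i + 1, v), (u, i), (u, v)} with hE
  set T := {p : ZMod (2 * n) × ZMod (2 * n) | Crosses (2 * n) p.1 (τ p.1) p.2 (τ p.2)} with hT
  set Sg := {p : ZMod (2 * n) × ZMod (2 * n) |
    Crosses (2 * n) p.1 (sMove n i τ p.1) p.2 (sMove n i τ p.2)} with hSg
  have hFinvol : ∀ p, F (F p) = p := by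
    intro p; simp [hF, Equiv.swap_apply_self]
  have himage : ∀ p, p ∈ F '' T ↔ F p ∈ T := by
    intro p
    constructor
    · rintro ⟨q, hq, rfl⟩
      rwa [hFinvol q]
    · intro h
      exact ⟨F p, h, hFinvol p⟩
  have notboth : ∀ q1 q2 : ZMod (2 * n), Crosses (2 * n) q1 (τ q1) q2 (τ q2) →
      (q1 = i ∨ τ q1 = i) → (q2 = i + 1 ∨ τ q2 = i + 1) → False := by
    intro q1 q2 hq h1 h2
    have e1 : Crosses (2 * n) i u q2 (τ q2) := by
      rcases h1 with h | h
      · subst h; exact hq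
      · have hq1 : q1 = u := by rw [← hinv q1, h, ← hu]
        subst hq1
        rw [hτu] at hq
        exact crosses_swap_left.mp hq
    have e2 : Crosses (2 * n) i u (i + 1) v := by
      rcases h2 with h | h
      · subst h; exact e1
      · have hq2 : q2 = v := by rw [← hinv q2, h, ← hv]
        subst hq2
        rw [hτv] at e1
        exact crosses_swap_right.mp e1
    exact hnc e2
  have notboth' : ∀ q1 q2 : ZMod (2 * n), Crosses (2 * n) q1 (τ q1) q2 (τ q2) →
      (q1 = i + 1 ∨ τ q1 = i + 1) → (q2 = i ∨ τ q2 = i) → False := by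
    intro q1 q2 hq h1 h2
    obtain ⟨d1, d2, d3, d4, d5, d6, d7⟩ := hq
    exact notboth q2 q1 ((crosses_swap d1 d2 d3 d4 d5 d6).mp ⟨d1, d2, d3, d4, d5, d6, d7⟩) h2 h1
  have hiff : ∀ q1 q2 : ZMod (2 * n),
      q1 ≠ τ q1 → q2 ≠ τ q2 → q2 ≠ q1 → q2 ≠ τ q1 → τ q2 ≠ q1 → τ q2 ≠ τ q1 →
      ¬(((q1 = i ∨ τ q1 = i) ∧ (q2 = i + 1 ∨ τ q2 = i + 1)) ∨
        ((q1 = i + 1 ∨ τ q1 = i + 1) ∧ (q2 = i ∨ τ q2 = i))) →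
      (Crosses (2 * n) q1 (τ q1) q2 (τ q2) ↔
        Crosses (2 * n) (Equiv.swap i (i + 1) q1) (Equiv.swap i (i + 1) (τ q1))
          (Equiv.swap i (i + 1) q2) (Equiv.swap i (i + 1) (τ q2))) := by
    intro q1 q2 d1 d2 d3 d4 d5 d6 hsp
    exact crosses_s_main hm d1 d2 d3 d4 d5 d6 hsp
  have hdecomp : Sg = F '' T ∪ E := by
    ext ⟨p1, p2⟩
    simp only [Set.mem_union, himage]
    simp only [hSg, hT, Set.mem_setOf_eq, hF]
    constructor
    · intro hp
      by_cases hS : (p1 = i ∨ p1 = i + 1 ∨ p1 = u ∨ p1 = v) ∧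
          (p2 = i ∨ p2 = i + 1 ∨ p2 = u ∨ p2 = v)
      · right
        obtain ⟨e1, e2, e3, e4, e5, e6, -⟩ := hp
        obtain ⟨g1, g2⟩ := hS
        rcases g1 with rfl | rfl | rfl | rfl <;> rcases g2 with rfl | rfl | rfl | rfl <;>
          first
          | exact absurd rfl e3
          | (rw [hσi] at e4; exact absurd rfl e4)
          | (rw [hσi1] at e4; exact absurd rfl e4)
          | (rw [hσu] at e4; exact absurd rfl e4)
          | (rw [hσv] at e4; exact absurd rfl e4)
          | simp [hE, Prod.ext_iff]
      · left
        refine (hiff (Equiv.swap i (i + 1) p1) (Equiv.swap i (i + 1) p2)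
          ?_ ?_ ?_ ?_ ?_ ?_ ?_).mpr ?_
        · intro h
          refine hp.1 ?_
          have h2 := congrArg (Equiv.swap i (i + 1)) h
          simpa [Equiv.swap_apply_self, sMove] using h2
        · intro h
          refine hp.2.1 ?_
          have h2 := congrArg (Equiv.swap i (i + 1)) h
          simpa [Equiv.swap_apply_self, sMove] using h2
        · intro h
          exact hp.2.2.1 ((Equiv.swap i (i + 1)).injective h)
        · intro h
          refine hp.2.2.2.1 ?_
          have h2 := congrArg (Equiv.swap i (i + 1)) h
          simpa [Equiv.swap_apply_self, sMove] using h2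
        · intro h
          refine hp.2.2.2.2.1 ?_
          have h2 := congrArg (Equiv.swap i (i + 1)) h
          simpa [Equiv.swap_apply_self, sMove] using h2
        · intro h
          exact hp.2.2.2.2.2.1 (congrArg (Equiv.swap i (i + 1)) h)
        · intro hcon
          apply hS
          rcases hcon with ⟨g1, g2⟩ | ⟨g1, g2⟩
          · constructor
            · rcases g1 with h | h
              · right; left
                have h2 := congrArg (Equiv.swap i (i + 1)) h
                rw [Equiv.swap_apply_self, Equiv.swap_apply_left] at h2
                exact h2
              · right; right; left
                have h2 : Equiv.swap i (i + 1) p1 = u := by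
                  rw [← hinv (Equiv.swap i (i + 1) p1), h, ← hu]
                have h3 := congrArg (Equiv.swap i (i + 1)) h2
                rw [Equiv.swap_apply_self, swap_fix i (i + 1) u hui hui1] at h3
                exact h3
            · rcases g2 with h | h
              · left
                have h2 := congrArg (Equiv.swap i (i + 1)) h
                rw [Equiv.swap_apply_self, Equiv.swap_apply_right] at h2
                exact h2
              · right; right; right
                have h2 : Equiv.swap i (i + 1) p2 = v := by
                  rw [← hinv (Equiv.swap i (i + 1) p2), h, ← hv]
                have h3 := congrArg (Equiv.swap i (i + 1)) h2
                rw [Equiv.swap_apply_self, swap_fix i (i + 1) v hvi hvi1] at h3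
                exact h3
          · constructor
            · rcases g1 with h | h
              · left
                have h2 := congrArg (Equiv.swap i (i + 1)) h
                rw [Equiv.swap_apply_self, Equiv.swap_apply_right] at h2
                exact h2
              · right; right; right
                have h2 : Equiv.swap i (i + 1) p1 = v := by
                  rw [← hinv (Equiv.swap i (i + 1) p1), h, ← hv]
                have h3 := congrArg (Equiv.swap i (i + 1)) h2
                rw [Equiv.swap_apply_self, swap_fix i (i + 1) v hvi hvi1] at h3
                exact h3
            · rcases g2 with h | h
              · right; left
                have h2 := congrArg (Equiv.swap i (i + 1)) h
                rw [Equiv.swap_apply_self, Equiv.swap_apply_left] at h2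
                exact h2
              · right; right; left
                have h2 : Equiv.swap i (i + 1) p2 = u := by
                  rw [← hinv (Equiv.swap i (i + 1) p2), h, ← hu]
                have h3 := congrArg (Equiv.swap i (i + 1)) h2
                rw [Equiv.swap_apply_self, swap_fix i (i + 1) u hui hui1] at h3
                exact h3
        · simp only [Equiv.swap_apply_self]
          exact hp
    · intro h
      rcases h with himg2 | hEp
      · have hsp : ¬(((Equiv.swap i (i + 1) p1 = i ∨ τ (Equiv.swap i (i + 1) p1) = i) ∧
            (Equiv.swap i (i + 1) p2 = i + 1 ∨ τ (Equiv.swap i (i + 1) p2) = i + 1)) ∨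
            ((Equiv.swap i (i + 1) p1 = i + 1 ∨ τ (Equiv.swap i (i + 1) p1) = i + 1) ∧
            (Equiv.swap i (i + 1) p2 = i ∨ τ (Equiv.swap i (i + 1) p2) = i))) := by
          intro hcon
          rcases hcon with ⟨g1, g2⟩ | ⟨g1, g2⟩
          · exact notboth _ _ himg2 g1 g2
          · exact notboth' _ _ himg2 g1 g2
        have hres := (hiff _ _ himg2.1 himg2.2.1 himg2.2.2.1 himg2.2.2.2.1
          himg2.2.2.2.2.1 himg2.2.2.2.2.2.1 hsp).mp himg2
        simpa [Equiv.swap_apply_self, sMove] using hres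
      · have c1 : Crosses (2 * n) i v (i + 1) u := hXuv
        have c2 : Crosses (2 * n) i v u (i + 1) := crosses_swap_right.mp hXuv
        have c3 : Crosses (2 * n) v i (i + 1) u := crosses_swap_left.mp hXuv
        have c4 : Crosses (2 * n) v i u (i + 1) := crosses_swap_right.mp c3
        have c5 : Crosses (2 * n) (i + 1) u i v := by
          obtain ⟨d1, d2, d3, d4, d5, d6, d7⟩ := hXuv
          exact (crosses_swap d1 d2 d3 d4 d5 d6).mp ⟨d1, d2, d3, d4, d5, d6, d7⟩
        have c6 : Crosses (2 * n) (i + 1) u v i := crosses_swap_right.mp c5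
        have c7 : Crosses (2 * n) u (i + 1) i v := crosses_swap_left.mp c5
        have c8 : Crosses (2 * n) u (i + 1) v i := crosses_swap_right.mp c7
        simp only [hE, Set.mem_insert_iff, Set.mem_singleton_iff, Prod.mk.injEq] at hEp
        rcases hEp with ⟨rfl, rfl⟩ | ⟨rfl, rfl⟩ | ⟨rfl, rfl⟩ | ⟨rfl, rfl⟩ | ⟨rfl, rfl⟩ |
          ⟨rfl, rfl⟩ | ⟨rfl, rfl⟩ | ⟨rfl, rfl⟩ <;>
          simp only [hσi, hσi1, hσu, hσv] <;> assumption
  have hdisj : Disjoint (F '' T) E := by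
    rw [Set.disjoint_left]
    rintro ⟨p1, p2⟩ hpF hpE
    rw [himage] at hpF
    simp only [hT, hF, Set.mem_setOf_eq] at hpF
    simp only [hE, Set.mem_insert_iff, Set.mem_singleton_iff, Prod.mk.injEq] at hpE
    rcases hpE with ⟨h1, h2⟩ | ⟨h1, h2⟩ | ⟨h1, h2⟩ | ⟨h1, h2⟩ | ⟨h1, h2⟩ |
      ⟨h1, h2⟩ | ⟨h1, h2⟩ | ⟨h1, h2⟩ <;> rw [h1, h2] at hpF
    · rw [Equiv.swap_apply_left, Equiv.swap_apply_right] at hpF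
      exact notboth' _ _ hpF (Or.inl rfl) (Or.inl rfl)
    · rw [Equiv.swap_apply_left, swap_fix i (i + 1) u hui hui1] at hpF
      exact notboth' _ _ hpF (Or.inl rfl) (Or.inr hτu)
    · rw [swap_fix i (i + 1) v hvi hvi1, Equiv.swap_apply_right] at hpF
      exact notboth' _ _ hpF (Or.inr hτv) (Or.inl rfl)
    · rw [swap_fix i (i + 1) v hvi hvi1, swap_fix i (i + 1) u hui hui1] at hpF
      exact notboth' _ _ hpF (Or.inr hτv) (Or.inr hτu)
    · rw [Equiv.swap_apply_right, Equiv.swap_apply_left] at hpF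
      exact notboth _ _ hpF (Or.inl rfl) (Or.inl rfl)
    · rw [Equiv.swap_apply_right, swap_fix i (i + 1) v hvi hvi1] at hpF
      exact notboth _ _ hpF (Or.inl rfl) (Or.inr hτv)
    · rw [swap_fix i (i + 1) u hui hui1, Equiv.swap_apply_left] at hpF
      exact notboth _ _ hpF (Or.inr hτu) (Or.inl rfl)
    · rw [swap_fix i (i + 1) u hui hui1, swap_fix i (i + 1) v hvi hvi1] at hpF
      exact notboth _ _ hpF (Or.inr hτu) (Or.inr hτv)
  have hiu : i ≠ u := Ne.symm hui
  have hiv : i ≠ v := Ne.symm hvi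
  have hi1u : i + 1 ≠ u := Ne.symm hui1
  have hi1v : i + 1 ≠ v := Ne.symm hvi1
  have hi1i : i + 1 ≠ i := Ne.symm hii1
  have hvu : v ≠ u := Ne.symm huv
  have hEcard : E.ncard = 8 := by
    rw [hE]
    rw [Set.ncard_insert_of_notMem (by
      simp [Prod.ext_iff, hii1, hiu, hiv, hi1u, hi1v, hi1i, hvu, hui, hui1, hvi, hvi1, huv])]
    rw [Set.ncard_insert_of_notMem (by
      simp [Prod.ext_iff, hii1, hiu, hiv, hi1u, hi1v, hi1i, hvu, hui, hui1, hvi, hvi1, huv])]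
    rw [Set.ncard_insert_of_notMem (by
      simp [Prod.ext_iff, hii1, hiu, hiv, hi1u, hi1v, hi1i, hvu, hui, hui1, hvi, hvi1, huv])]
    rw [Set.ncard_insert_of_notMem (by
      simp [Prod.ext_iff, hii1, hiu, hiv, hi1u, hi1v, hi1i, hvu, hui, hui1, hvi, hvi1, huv])]
    rw [Set.ncard_insert_of_notMem (by
      simp [Prod.ext_iff, hii1, hiu, hiv, hi1u, hi1v, hi1i, hvu, hui, hui1, hvi, hvi1, huv])]
    rw [Set.ncard_insert_of_notMem (by
      simp [Prod.ext_iff, hii1, hiu, hiv, hi1u, hi1v, hi1i, hvu, hui, hui1, hvi, hvi1, huv])]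
    rw [Set.ncard_insert_of_notMem (by
      simp [Prod.ext_iff, hii1, hiu, hiv, hi1u, hi1v, hi1i, hvu, hui, hui1, hvi, hvi1, huv])]
    rw [Set.ncard_singleton]
  have hFinj : Function.Injective F := by
    intro p q h
    have h1 := congrArg Prod.fst h
    have h2 := congrArg Prod.snd h
    simp only [hF] at h1 h2
    exact Prod.ext ((Equiv.swap i (i + 1)).injective h1) ((Equiv.swap i (i + 1)).injective h2)
  have hkey : Sg.ncard = T.ncard + 8 := by
    rw [hdecomp, Set.ncard_union_eq hdisj (Set.toFinite _) (Set.toFinite _),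
      Set.ncard_image_of_injective _ hFinj, hEcard]
  have hc1 : crossNum n (sMove n i τ) = Sg.ncard / 8 := rfl
  have hc2 : crossNum n τ = T.ncard / 8 := rfl
  omega

end CaseA

/-- For `τ ∈ P_n` and `i ∈ ℤ/2nℤ`: if `i ∈ A(τ)` then `s_i·τ` covers `τ`
and `c(s_i·τ) = c(τ) + 1`; if `i ∈ B(τ)` then `τ` covers `s_i·τ` and
`c(s_i·τ) = c(τ) - 1`; if `i ∈ C(τ)` then `s_i·τ = τ`. -/
theorem sMove_cover (n : ℕ) (hn : 1 ≤ n)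
    (τ : ZMod (2 * n) → ZMod (2 * n)) (hτ : IsMatching n τ) (i : ZMod (2 * n)) :
    (inA n τ i →
      UncrossLE n τ (sMove n i τ) ∧ τ ≠ sMove n i τ ∧
      (∀ σ, IsMatching n σ → UncrossLE n τ σ → UncrossLE n σ (sMove n i τ) →
        σ = τ ∨ σ = sMove n i τ) ∧
      crossNum n (sMove n i τ) = crossNum n τ + 1) ∧
    (inB n τ i →
      UncrossLE n (sMove n i τ) τ ∧ sMove n i τ ≠ τ ∧
      (∀ σ, IsMatching n σ → UncrossLE n (sMove n i τ) σ → UncrossLE n σ τ →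
        σ = sMove n i τ ∨ σ = τ) ∧
      crossNum n τ = crossNum n (sMove n i τ) + 1) ∧
    (inC n τ i → sMove n i τ = τ) := by
  haveI : NeZero (2 * n) := ⟨by omega⟩
  have hm : 1 < 2 * n := by omega
  refine ⟨?_, ?_, ?_⟩
  · intro hA
    obtain ⟨hu1, hnc⟩ := hA
    obtain ⟨hmove, hcnt⟩ := caseA hn τ hτ i hu1 hnc
    have hσm : IsMatching n (sMove n i τ) := sMove_matching n τ hτ i
    refine ⟨Relation.ReflTransGen.single ⟨hτ, hσm, hmove, hcnt⟩, ?_, ?_, hcnt⟩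
    · intro h
      rw [← h] at hcnt
      omega
    · intro σ hσ h1 h2
      rcases uncrossLE_mono h1 with h | h
      · exact Or.inl h.symm
      · rcases uncrossLE_mono h2 with g | g
        · exact Or.inr g
        · exfalso; omega
  · intro hB
    obtain ⟨hu1, hc⟩ := hB
    have hσm : IsMatching n (sMove n i τ) := sMove_matching n τ hτ i
    have hvi1 : τ (i + 1) ≠ i + 1 := hτ.2 (i + 1)
    have hui : τ i ≠ i := hτ.2 i
    have hvi : τ (i + 1) ≠ i := by
      intro h
      have h2 := hτ.1 (i + 1)
      rw [h] at h2
      exact hu1 h2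
    have hσi : sMove n i τ i = τ (i + 1) := by
      show Equiv.swap i (i + 1) (τ (Equiv.swap i (i + 1) i)) = τ (i + 1)
      rw [Equiv.swap_apply_left, swap_fix i (i + 1) (τ (i + 1)) hvi hvi1]
    have hσi1 : sMove n i τ (i + 1) = τ i := by
      show Equiv.swap i (i + 1) (τ (Equiv.swap i (i + 1) (i + 1))) = τ i
      rw [Equiv.swap_apply_right, swap_fix i (i + 1) (τ i) hui hu1]
    have hB1 : sMove n i τ i ≠ i + 1 := by rw [hσi]; exact hvi1
    have hB2 : ¬ Crosses (2 * n) i (sMove n i τ i) (i + 1) (sMove n i τ (i + 1)) := by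
      rw [hσi, hσi1]
      have huv : τ i ≠ τ (i + 1) := by
        intro h
        have h2 := congrArg τ h
        rw [hτ.1, hτ.1] at h2
        exact self_ne_add_one hm i h2
      exact (crosses_one hm hui hu1 hvi hvi1 huv).mp hc
    obtain ⟨hmove, hcnt⟩ := caseA hn (sMove n i τ) hσm i hB1 hB2
    rw [sMove_invol n i τ] at hmove hcnt
    refine ⟨Relation.ReflTransGen.single ⟨hσm, hτ, hmove, hcnt⟩, ?_, ?_, hcnt⟩
    · intro h
      rw [h] at hcnt
      omega
    · intro σ hσ h1 h2
      rcases uncrossLE_mono h1 with h | h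
      · exact Or.inl h.symm
      · rcases uncrossLE_mono h2 with g | g
        · exact Or.inr g
        · exfalso; omega
  · intro hC
    exact sMove_inC n τ hτ i hC
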